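/- arXiv:2404.07994 — 3 statements merged into one kernel-verified Lean document; each statement's English description precedes it below -/
import Mathlib

section
/- For α, β ∈ [0,1] with α ≠ β, the (α,β)-order ⪯_{(α,β)} on closed subintervals of [0,1], defined by x ⪯_{(α,β)} z iff K_α(x) < K_α(z) or (K_α(x) = K_α(z) and K_β(x) ≤ K_β(z)), where K_γ([a,b]) = (1-γ)a + γb, is a total order that refines the interval order ≤_iv (i.e., is an admissible order with respect to ≤_iv). -/
/-- A subinterval `[a,b]` of `[0,1]`, as a pair of reals. -/
def IsI01 (p : ℝ × ℝ) : Prop := 0 ≤ p.1 ∧ p.1 ≤ p.2 ∧ p.2 ≤ 1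

/-- `K_γ([a,b]) = (1-γ)a + γb`. -/
def Kmap (γ : ℝ) (p : ℝ × ℝ) : ℝ := (1 - γ) * p.1 + γ * p.2

/-- The `(α,β)`-order. -/
def preAB (α β : ℝ) (x z : ℝ × ℝ) : Prop :=
  Kmap α x < Kmap α z ∨ (Kmap α x = Kmap α z ∧ Kmap β x ≤ Kmap β z)

/-- The interval (product) order on pairs. -/
def leIv' (x z : ℝ × ℝ) : Prop := x.1 ≤ z.1 ∧ x.2 ≤ z.2

/-- for `α ≠ β` in `[0,1]`, the `(α,β)`-order is a total order on
subintervals of `[0,1]` refining the interval order. -/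
theorem stmt_6 (α β : ℝ) (hα : α ∈ Set.Icc (0:ℝ) 1) (hβ : β ∈ Set.Icc (0:ℝ) 1)
    (hαβ : α ≠ β) :
    (∀ x, IsI01 x → preAB α β x x) ∧
    (∀ x z, IsI01 x → IsI01 z → preAB α β x z → preAB α β z x → x = z) ∧
    (∀ x y z, IsI01 x → IsI01 y → IsI01 z →
      preAB α β x y → preAB α β y z → preAB α β x z) ∧
    (∀ x z, IsI01 x → IsI01 z → preAB α β x z ∨ preAB α β z x) ∧
    (∀ x z, IsI01 x → IsI01 z → leIv' x z → preAB α β x z) := by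
  obtain ⟨hα0, hα1⟩ := hα
  obtain ⟨hβ0, hβ1⟩ := hβ
  refine ⟨?_, ?_, ?_, ?_, ?_⟩
  · intro x _
    exact Or.inr ⟨rfl, le_refl _⟩
  · intro x z _ _ h1 h2
    rcases h1 with h1 | ⟨he1, hb1⟩
    · rcases h2 with h2 | ⟨he2, _⟩
      · exact absurd h2 (not_lt.2 h1.le)
      · exact absurd (he2 ▸ h1) (lt_irrefl _)
    · rcases h2 with h2 | ⟨he2, hb2⟩
      · exact absurd h2 (not_lt.2 he1.le)
      · have hb : Kmap β x = Kmap β z := le_antisymm hb1 hb2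
        simp only [Kmap] at he1 hb
        have hne := sub_ne_zero.2 hαβ
        have key : (α - β) * (x.2 - x.1) = (α - β) * (z.2 - z.1) := by
          linear_combination he1 - hb
        have hd : x.2 - x.1 = z.2 - z.1 := mul_left_cancel₀ hne key
        have h1 : x.1 = z.1 := by linear_combination he1 - α * hd
        have h2 : x.2 = z.2 := by linarith
        exact Prod.ext h1 h2
  · intro x y z _ _ _ h1 h2
    rcases h1 with h1 | ⟨he1, hb1⟩ <;> rcases h2 with h2 | ⟨he2, hb2⟩
    · exact Or.inl (h1.trans h2)
    · exact Or.inl (he2 ▸ h1)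
    · exact Or.inl (he1 ▸ h2)
    · exact Or.inr ⟨he1.trans he2, hb1.trans hb2⟩
  · intro x z _ _
    rcases lt_trichotomy (Kmap α x) (Kmap α z) with h | h | h
    · exact Or.inl (Or.inl h)
    · rcases le_total (Kmap β x) (Kmap β z) with hb | hb
      · exact Or.inl (Or.inr ⟨h, hb⟩)
      · exact Or.inr (Or.inr ⟨h.symm, hb⟩)
    · exact Or.inr (Or.inl h)
  · intro x z _ _ ⟨h1, h2⟩
    have hA : Kmap α x ≤ Kmap α z := by
      simp only [Kmap]
      have : (0:ℝ) ≤ 1 - α := by linarith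
      nlinarith
    rcases eq_or_lt_of_le hA with he | hl
    · refine Or.inr ⟨he, ?_⟩
      simp only [Kmap]
      have : (0:ℝ) ≤ 1 - β := by linarith
      nlinarith
    · exact Or.inl hl
end

section
/- Let δ : [0,1]² → [0,1] be a real-valued dissimilarity function. The 'chain additivity' condition δ(b₁,c) + δ(c,b₂) = δ(b₁,d) + δ(d,b₂) for all b₂ ≤ c ≤ b₁ and b₂ ≤ d ≤ b₁ is equivalent to the condition δ(b,d) = δ(b,0) − δ(d,0) for all d ≤ b. -/
/-- for a real-valued dissimilarity function δ on [0,1], chain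
additivity δ(b₁,c) + δ(c,b₂) = δ(b₁,d) + δ(d,b₂) for all b₂ ≤ c,d ≤ b₁ is
equivalent to δ(b,d) = δ(b,0) − δ(d,0) for all d ≤ b. -/
theorem stmt_9 (δ : ℝ → ℝ → ℝ)
    (hrange : ∀ x ∈ Set.Icc (0:ℝ) 1, ∀ y ∈ Set.Icc (0:ℝ) 1, δ x y ∈ Set.Icc (0:ℝ) 1)
    (hsymm : ∀ x ∈ Set.Icc (0:ℝ) 1, ∀ y ∈ Set.Icc (0:ℝ) 1, δ x y = δ y x)
    (hzeroone : δ 0 1 = 1)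
    (hdiag : ∀ x ∈ Set.Icc (0:ℝ) 1, δ x x = 0)
    (hmono : ∀ x y z, x ∈ Set.Icc (0:ℝ) 1 → y ∈ Set.Icc (0:ℝ) 1 → z ∈ Set.Icc (0:ℝ) 1 →
      x ≤ y → y ≤ z → δ x y ≤ δ x z ∧ δ y z ≤ δ x z) :
    (∀ b₁ b₂ c d, b₁ ∈ Set.Icc (0:ℝ) 1 → b₂ ∈ Set.Icc (0:ℝ) 1 →
      b₂ ≤ c → c ≤ b₁ → b₂ ≤ d → d ≤ b₁ →
      δ b₁ c + δ c b₂ = δ b₁ d + δ d b₂) ↔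
    (∀ b d, b ∈ Set.Icc (0:ℝ) 1 → d ∈ Set.Icc (0:ℝ) 1 → d ≤ b →
      δ b d = δ b 0 - δ d 0) := by
  constructor
  · intro h b d hb hd hdb
    have h0 : (0:ℝ) ∈ Set.Icc (0:ℝ) 1 := by constructor <;> norm_num
    have := h b 0 d 0 hb h0 hd.1 hdb le_rfl hb.1
    have hz := hdiag 0 h0
    linarith
  · intro h b₁ b₂ c d hb₁ hb₂ hc₁ hc₂ hd₁ hd₂
    have hc : c ∈ Set.Icc (0:ℝ) 1 := ⟨le_trans hb₂.1 hc₁, le_trans hc₂ hb₁.2⟩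
    have hd : d ∈ Set.Icc (0:ℝ) 1 := ⟨le_trans hb₂.1 hd₁, le_trans hd₂ hb₁.2⟩
    have e1 := h b₁ c hb₁ hc hc₂
    have e2 := h c b₂ hc hb₂ hc₁
    have e3 := h b₁ d hb₁ hd hd₂
    have e4 := h d b₂ hd hb₂ hd₁
    have s1 := hsymm c hc b₂ hb₂
    have s2 := hsymm d hd b₂ hb₂
    linarith
end

section
/- Let ⪯ be a total order on intervals of [0,1] refining the interval order, compatible with scalar multiplication c ⊙_iv [a,b] = [ca, cb] (x ⪯ y implies c ⊙_iv x ⪯ c ⊙_iv y for c ∈ [0,1]), and whose strict part is compatible with interval addition ⊕_iv. Suppose b₁, b₂ ∈ [0,1] with b₂ ≤ b₁ and intervals u₁ ⪯ u₂, v₁ ⪯ v₂ with u₁ ⊕_iv v₂ = u₂ ⊕_iv v₁ a subinterval of [0,1]. Then for the (α,β)-order (α≠β, α,β ∈ [0,1]): (b₁ ⊙_iv u₁) ⊕_iv (b₂ ⊙_iv v₂) ⪯ (b₁ ⊙_iv u₂) ⊕_iv (b₂ ⊙_iv v₁). -/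
/-- Interval addition: add the endpoints. -/
def addIv (x z : ℝ × ℝ) : ℝ × ℝ := (x.1 + z.1, x.2 + z.2)

/-- Interval scalar multiplication `c ⊙ [a,b] = [ca,cb]`. -/
def smulIv (c : ℝ) (x : ℝ × ℝ) : ℝ × ℝ := (c * x.1, c * x.2)

/-- condition (C1) for the `(α,β)`-order: if b₂ ≤ b₁, u₁ ⪯ u₂,
v₁ ⪯ v₂ and u₁ ⊕ v₂ = u₂ ⊕ v₁ is a subinterval of [0,1], then
(b₁ ⊙ u₁) ⊕ (b₂ ⊙ v₂) ⪯ (b₁ ⊙ u₂) ⊕ (b₂ ⊙ v₁). -/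
theorem stmt_16 (α β : ℝ) (hα : α ∈ Set.Icc (0:ℝ) 1) (hβ : β ∈ Set.Icc (0:ℝ) 1)
    (hαβ : α ≠ β)
    (b₁ b₂ : ℝ) (hb₁ : b₁ ∈ Set.Icc (0:ℝ) 1) (hb₂ : b₂ ∈ Set.Icc (0:ℝ) 1)
    (hb : b₂ ≤ b₁)
    (u₁ u₂ v₁ v₂ : ℝ × ℝ)
    (hu₁ : IsI01 u₁) (hu₂ : IsI01 u₂) (hv₁ : IsI01 v₁) (hv₂ : IsI01 v₂)
    (hu : preAB α β u₁ u₂) (hv : preAB α β v₁ v₂)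
    (hcross : addIv u₁ v₂ = addIv u₂ v₁) (hmem : IsI01 (addIv u₁ v₂)) :
    preAB α β (addIv (smulIv b₁ u₁) (smulIv b₂ v₂))
      (addIv (smulIv b₁ u₂) (smulIv b₂ v₁)) := by
  have h1 : u₁.1 + v₂.1 = u₂.1 + v₁.1 := congrArg Prod.fst hcross
  have h2 : u₁.2 + v₂.2 = u₂.2 + v₁.2 := congrArg Prod.snd hcross
  simp only [preAB, Kmap, addIv, smulIv] at hu hv ⊢
  have hcα : ((1 - α) * u₁.1 + α * u₁.2) + ((1 - α) * v₂.1 + α * v₂.2)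
      = ((1 - α) * u₂.1 + α * u₂.2) + ((1 - α) * v₁.1 + α * v₁.2) := by
    linear_combination (1 - α) * h1 + α * h2
  have hcβ : ((1 - β) * u₁.1 + β * u₁.2) + ((1 - β) * v₂.1 + β * v₂.2)
      = ((1 - β) * u₂.1 + β * u₂.2) + ((1 - β) * v₁.1 + β * v₁.2) := by
    linear_combination (1 - β) * h1 + β * h2
  set A1 := (1 - α) * u₁.1 + α * u₁.2 with hA1
  set A2 := (1 - α) * u₂.1 + α * u₂.2 with hA2
  set A3 := (1 - α) * v₁.1 + α * v₁.2 with hA3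
  set A4 := (1 - α) * v₂.1 + α * v₂.2 with hA4
  set B1 := (1 - β) * u₁.1 + β * u₁.2 with hB1
  set B2 := (1 - β) * u₂.1 + β * u₂.2 with hB2
  set B3 := (1 - β) * v₁.1 + β * v₁.2 with hB3
  set B4 := (1 - β) * v₂.1 + β * v₂.2 with hB4
  have eL : (1 - α) * (b₁ * u₁.1 + b₂ * v₂.1) + α * (b₁ * u₁.2 + b₂ * v₂.2)
      = b₁ * A1 + b₂ * A4 := by rw [hA1, hA4]; ring
  have eR : (1 - α) * (b₁ * u₂.1 + b₂ * v₁.1) + α * (b₁ * u₂.2 + b₂ * v₁.2)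
      = b₁ * A2 + b₂ * A3 := by rw [hA2, hA3]; ring
  have fL : (1 - β) * (b₁ * u₁.1 + b₂ * v₂.1) + β * (b₁ * u₁.2 + b₂ * v₂.2)
      = b₁ * B1 + b₂ * B4 := by rw [hB1, hB4]; ring
  have fR : (1 - β) * (b₁ * u₂.1 + b₂ * v₁.1) + β * (b₁ * u₂.2 + b₂ * v₁.2)
      = b₁ * B2 + b₂ * B3 := by rw [hB2, hB3]; ring
  rw [eL, eR, fL, fR]
  clear_value A1 A2 A3 A4 B1 B2 B3 B4
  rcases hu with hu | ⟨hu1, hu2⟩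
  · rcases lt_or_eq_of_le hb with hbb | hbb
    · left
      have hp : 0 < (b₁ - b₂) * (A2 - A1) :=
        mul_pos (sub_pos.mpr hbb) (sub_pos.mpr hu)
      have hm : b₂ * (A1 + A4) = b₂ * (A2 + A3) := by rw [hcα]
      nlinarith [hp, hm]
    · subst hbb
      right
      exact ⟨by linear_combination b₂ * hcα, le_of_eq (by linear_combination b₂ * hcβ)⟩
  · rcases hv with hv | ⟨hv1, hv2⟩
    · exfalso; linarith
    · right
      constructor
      · linear_combination b₁ * hu1 - b₂ * hv1
      · have h34 : B4 - B3 = B2 - B1 := by linarith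
        have := mul_le_mul_of_nonneg_right hb (sub_nonneg.mpr hu2)
        have hm : b₂ * (B4 - B3) = b₂ * (B2 - B1) := by rw [h34]
        nlinarith [hm.trans_le this]
end
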